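/- Every finitely generated torsion-free nilpotent group π is principal: for all finite subsets S, S' ⊆ π, the index of Z(S) ∩ Z(S') in Z(S) is either 1 or infinite. -/

import Mathlib

/-- Old Mathlib definition (removed since): no nontrivial element has finite order. -/
def Monoid.IsTorsionFree (G : Type*) [Monoid G] : Prop :=
  ∀ g : G, g ≠ 1 → ¬IsOfFinOrder g

open Subgroup
open scoped commutatorElement

universe u

/-- Torsion-free means `n`-th powers detect the identity. -/
lemma tf_eq_one {G : Type*} [Group G] (htf : Monoid.IsTorsionFree G) {g : G} {n : ℕ}
    (hn : n ≠ 0) (h : g ^ n = 1) : g = 1 := by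
  by_contra h1
  exact htf g h1 (isOfFinOrder_iff_pow_eq_one.mpr ⟨n, Nat.pos_of_ne_zero hn, h⟩)

/-- If the commutator `c = x*y*x⁻¹*y⁻¹` is central, then `[xⁿ, y] = cⁿ`. -/
lemma aux_pow {G : Type*} [Group G] (x y c : G) (hc : c = x * y * x⁻¹ * y⁻¹)
    (h : ∀ g, Commute c g) : ∀ n : ℕ, x ^ n * y * (x ^ n)⁻¹ * y⁻¹ = c ^ n := by
  intro n
  induction n with
  | zero => simp
  | succ n ih =>
    have h1 : x ^ n * y * (x ^ n)⁻¹ = c ^ n * y := by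
      calc x ^ n * y * (x ^ n)⁻¹
          = (x ^ n * y * (x ^ n)⁻¹ * y⁻¹) * y := by group
        _ = c ^ n * y := by rw [ih]
    have hx : x * c ^ n = c ^ n * x := ((h x).pow_left n).eq.symm
    calc x ^ (n + 1) * y * (x ^ (n + 1))⁻¹ * y⁻¹
        = x * (x ^ n * y * (x ^ n)⁻¹) * x⁻¹ * y⁻¹ := by group
      _ = x * (c ^ n * y) * x⁻¹ * y⁻¹ := by rw [h1]
      _ = (x * c ^ n) * (y * x⁻¹ * y⁻¹) := by group
      _ = (c ^ n * x) * (y * x⁻¹ * y⁻¹) := by rw [hx]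
      _ = c ^ n * (x * y * x⁻¹ * y⁻¹)⁻¹⁻¹ := by group
      _ = c ^ n * c := by rw [← hc, inv_inv]
      _ = c ^ (n + 1) := by rw [pow_succ]

/-- Successive quotients of the upper central series of a torsion-free group are
torsion-free. -/
lemma ucs_tf {G : Type*} [Group G] (htf : Monoid.IsTorsionFree G) :
    ∀ i : ℕ, ∀ x : G, ∀ n : ℕ, n ≠ 0 → x ∈ Subgroup.upperCentralSeries G (i + 1) →
      x ^ n ∈ Subgroup.upperCentralSeries G i → x ∈ Subgroup.upperCentralSeries G i := by
  intro i
  induction i with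
  | zero =>
    intro x n hn _ hxn
    rw [Subgroup.upperCentralSeries_zero, Subgroup.mem_bot] at hxn ⊢
    exact tf_eq_one htf hn hxn
  | succ i ih =>
    intro x n hn hx hxn
    rw [Subgroup.mem_upperCentralSeries_succ_iff]
    intro y
    set N := Subgroup.upperCentralSeries G i with hN
    set z := x * y * x⁻¹ * y⁻¹ with hz
    have hz1 : z ∈ Subgroup.upperCentralSeries G (i + 1) :=
      (Subgroup.mem_upperCentralSeries_succ_iff.mp hx) y
    -- it suffices to show `z ^ n ∈ N` and apply the inductive hypothesis
    refine ih z n hn hz1 ?_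
    -- work in the quotient `G ⧸ N`
    let mk : G →* G ⧸ N := QuotientGroup.mk' N
    have hzbar : ∀ g : G ⧸ N, Commute (mk z) g := by
      intro g
      obtain ⟨a, rfl⟩ := QuotientGroup.mk_surjective g
      have : z * a * z⁻¹ * a⁻¹ ∈ N := (Subgroup.mem_upperCentralSeries_succ_iff.mp hz1) a
      have h1 : (⁅mk z, (QuotientGroup.mk a : G ⧸ N)⁆ : G ⧸ N) = 1 := by
        rw [commutatorElement_def]
        have : mk (z * a * z⁻¹ * a⁻¹) = 1 := (QuotientGroup.eq_one_iff _).mpr this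
        simpa [mk, map_mul, map_inv] using this
      exact commutatorElement_eq_one_iff_commute.mp h1
    have hmkz : mk z = mk x * mk y * (mk x)⁻¹ * (mk y)⁻¹ := by
      simp [mk, hz, map_mul, map_inv]
    have key := aux_pow (mk x) (mk y) (mk z) hmkz hzbar n
    have hLHS : (mk x) ^ n * mk y * ((mk x) ^ n)⁻¹ * (mk y)⁻¹ = 1 := by
      have hmem : x ^ n * y * (x ^ n)⁻¹ * y⁻¹ ∈ N :=
        (Subgroup.mem_upperCentralSeries_succ_iff.mp hxn) y
      have : mk (x ^ n * y * (x ^ n)⁻¹ * y⁻¹) = 1 := (QuotientGroup.eq_one_iff _).mpr hmem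
      simpa [mk, map_mul, map_inv, map_pow] using this
    have : (mk z) ^ n = 1 := by rw [← key, hLHS]
    have : mk (z ^ n) = 1 := by rw [map_pow]; exact this
    exact (QuotientGroup.eq_one_iff _).mp this

/-- In a torsion-free nilpotent group, the center is isolated. -/
lemma center_isolated {G : Type*} [Group G] [Group.IsNilpotent G]
    (htf : Monoid.IsTorsionFree G) {x : G} {n : ℕ} (hn : n ≠ 0)
    (h : x ^ n ∈ Subgroup.center G) : x ∈ Subgroup.center G := by
  have key : ∀ j : ℕ, ∀ x : G, x ∈ Subgroup.upperCentralSeries G j → x ^ n ∈ Subgroup.center G →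
      x ∈ Subgroup.center G := by
    intro j
    induction j with
    | zero =>
      intro x hx _
      rw [Subgroup.upperCentralSeries_zero, Subgroup.mem_bot] at hx
      rw [hx]; exact Subgroup.one_mem _
    | succ j ih =>
      intro x hx hxn
      rcases Nat.eq_zero_or_pos j with rfl | hj
      · rwa [Subgroup.upperCentralSeries_one] at hx
      · obtain ⟨j', rfl⟩ := Nat.exists_eq_add_of_le hj
        have h1 : x ^ n ∈ Subgroup.upperCentralSeries G (1 + j') := by
          have : Subgroup.center G ≤ Subgroup.upperCentralSeries G (1 + j') := by
            rw [← Subgroup.upperCentralSeries_one]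
            exact Subgroup.upperCentralSeries_mono G (by omega)
          exact this hxn
        exact ih x (ucs_tf htf (1 + j') x n hn hx h1) hxn
  obtain ⟨k, hk⟩ := Group.IsNilpotent.nilpotent (G := G)
  exact key k x (hk ▸ Subgroup.mem_top x) h

/-- In a torsion-free nilpotent group, if `xⁿ` commutes with `y` (`n ≠ 0`) then `x`
commutes with `y` (centralizers are isolated). Proven by induction on the
nilpotency class. -/
lemma commute_of_pow_commute_aux :
    ∀ k : ℕ, ∀ (G : Type u) [Group G] [Group.IsNilpotent G],
      Monoid.IsTorsionFree G → Group.nilpotencyClass G ≤ k →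
      ∀ x y : G, ∀ n : ℕ, n ≠ 0 → Commute (x ^ n) y → Commute x y := by
  intro k
  induction k with
  | zero =>
    intro G _ _ _ hclass x y n _ _
    have : Subsingleton G := nilpotencyClass_zero_iff_subsingleton.mp (Nat.le_zero.mp hclass)
    rw [Commute, SemiconjBy, Subsingleton.elim (x * y) (y * x)]
  | succ k ih =>
    intro G _ _ htf hclass x y n hn hcomm
    let Q := G ⧸ Subgroup.center G
    have htfQ : Monoid.IsTorsionFree Q := by
      intro g hg hfin
      obtain ⟨m, hm, hpow⟩ := isOfFinOrder_iff_pow_eq_one.mp hfin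
      obtain ⟨a, rfl⟩ := QuotientGroup.mk_surjective g
      have : ((QuotientGroup.mk (a ^ m) : Q)) = 1 := by rw [QuotientGroup.mk_pow]; exact hpow
      have hmem : a ^ m ∈ Subgroup.center G := (QuotientGroup.eq_one_iff _).mp this
      have : a ∈ Subgroup.center G := center_isolated htf hm.ne' hmem
      exact hg ((QuotientGroup.eq_one_iff _).mpr this)
    have hclassQ : Group.nilpotencyClass Q ≤ k := by
      show Group.nilpotencyClass (G ⧸ Subgroup.center G) ≤ k
      have := nilpotencyClass_quotient_center (G := G)
      omega
    let mk : G →* Q := QuotientGroup.mk' (Subgroup.center G)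
    have hcommQ : Commute (mk x) (mk y) :=
      ih Q htfQ hclassQ (mk x) (mk y) n hn
        (by have := hcomm.map mk; rwa [map_pow] at this)
    have hcenter : x * y * x⁻¹ * y⁻¹ ∈ Subgroup.center G := by
      have h1 : (⁅mk x, mk y⁆ : Q) = 1 := commutatorElement_eq_one_iff_commute.mpr hcommQ
      rw [commutatorElement_def] at h1
      have : mk (x * y * x⁻¹ * y⁻¹) = 1 := by simpa [map_mul, map_inv] using h1
      exact (QuotientGroup.eq_one_iff _).mp this
    set c := x * y * x⁻¹ * y⁻¹ with hc
    have hcentral : ∀ g : G, Commute c g := fun g =>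
      ((Subgroup.mem_center_iff.mp hcenter) g).symm
    have key := aux_pow x y c hc hcentral n
    have hLHS : x ^ n * y * (x ^ n)⁻¹ * y⁻¹ = 1 := by
      rw [← commutatorElement_def]
      exact commutatorElement_eq_one_iff_commute.mpr hcomm
    have : c ^ n = 1 := by rw [← key, hLHS]
    have hc1 : c = 1 := tf_eq_one htf hn this
    have : (⁅x, y⁆ : G) = 1 := by rw [commutatorElement_def]; exact hc1
    exact commutatorElement_eq_one_iff_commute.mp this

lemma commute_of_pow_commute {G : Type*} [Group G] [Group.IsNilpotent G]
    (htf : Monoid.IsTorsionFree G) {x y : G} {n : ℕ} (hn : n ≠ 0)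
    (hcomm : Commute (x ^ n) y) : Commute x y :=
  commute_of_pow_commute_aux (Group.nilpotencyClass G) G htf le_rfl x y n hn hcomm

/-- Every finitely generated torsion-free nilpotent group is principal: for all
finite subsets `S, S' ⊆ π`, the index of `Z(S) ∩ Z(S')` in `Z(S)` is either `1`
or infinite (infinite index is encoded by relative index `0`). -/
theorem stmt4 {π : Type*} [Group π] [Group.FG π] [Group.IsNilpotent π]
    (htf : Monoid.IsTorsionFree π) :
    ∀ S S' : Finset π,
      (Subgroup.centralizer (S : Set π) ⊓ Subgroup.centralizer (S' : Set π)).relIndex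
          (Subgroup.centralizer (S : Set π)) = 1 ∨
      (Subgroup.centralizer (S : Set π) ⊓ Subgroup.centralizer (S' : Set π)).relIndex
          (Subgroup.centralizer (S : Set π)) = 0 := by
  intro S S'
  set K := Subgroup.centralizer (S : Set π)
  set H := Subgroup.centralizer (S : Set π) ⊓ Subgroup.centralizer (S' : Set π) with hH
  by_cases h0 : H.relIndex K = 0
  · exact Or.inr h0
  · left
    set L := H.subgroupOf K with hL
    have hLfin : L.FiniteIndex := ⟨h0⟩
    have : L.normalCore.FiniteIndex := Subgroup.finiteIndex_normalCore L
    set m := L.normalCore.index with hm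
    have hm0 : m ≠ 0 := this.index_ne_zero
    have hLtop : L = ⊤ := by
      rw [Subgroup.eq_top_iff']
      intro k
      have hpow : k ^ m ∈ L.normalCore := Subgroup.pow_index_mem L.normalCore k
      have hpowL : k ^ m ∈ L := L.normalCore_le hpow
      -- hence `(k : π) ^ m` centralizes `S'`
      have hmem : ((k : π)) ^ m ∈ H := by
        have : ((k ^ m : K) : π) ∈ H := hpowL
        simpa using this
      have hS' : (k : π) ∈ Subgroup.centralizer (S' : Set π) := by
        rw [Subgroup.mem_centralizer_iff]
        intro s hs
        have : s * (k : π) ^ m = (k : π) ^ m * s :=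
          Subgroup.mem_centralizer_iff.mp (hH ▸ hmem).2 s hs
        have hc : Commute ((k : π) ^ m) s := this.symm
        exact (commute_of_pow_commute htf hm0 hc).symm.eq
      have : (k : π) ∈ H := ⟨k.2, hS'⟩
      exact this
    rw [Subgroup.relIndex, ← hL, hLtop, Subgroup.index_top]
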